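/- Let q, α, β ∈ ℂ and let n ≥ 2 be an integer. Let X be a ℂ-valued vector indexed by the subsets of [n−1]; write X^1 for its restriction to subsets of [n−2], and X^2 for the vector indexed by subsets S of [n−2] defined by X^2(S) = X(S ∪ {n−1}). Then (α·A_{n+1}^{(q)} + β·B_n^{(q)})X = 0 if and only if both ((q−1)α+β)·B_{n−1}^{(q)}(X^1 + X^2) = 0 and −qα·B_{n−1}^{(q)}X^1 + ((q−1)α+β)·A_n^{(q)}X^2 = 0. -/

import Mathlib

open Finset
open scoped Classical

namespace ExtPeaks

/-- `fget g j` is the `j`-th entry (1-indexed) of the sequence `g : Fin n → ℕ`,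
so `fget g j = g ⟨j - 1, _⟩` for `1 ≤ j ≤ n`. -/
def fget {n : ℕ} (g : Fin n → ℕ) (j : ℕ) : ℕ :=
  if h : j - 1 < n then g ⟨j - 1, h⟩ else 0

/-- `Peak(I) = {i ∈ I : i ≥ 2 and i - 1 ∉ I}`. -/
def peakOf (I : Finset ℕ) : Finset ℕ :=
  I.filter fun i => 2 ≤ i ∧ i - 1 ∉ I

/-- The monomial `x_{i_1} ⋯ x_{i_n}` attached to a sequence `g`, as a `Finsupp`. -/
noncomputable def monomialOf {n : ℕ} (g : Fin n → ℕ) : ℕ →₀ ℕ :=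
  ∑ j, Finsupp.single (g j) 1

/-- The (finitely many) weakly increasing sequences of positive integers of length `n`,
satisfying the peak condition `i_{j-1} < i_{j+1}` for `j ∈ Peak(I)`, with monomial `d`. -/
noncomputable def Lseqs (n : ℕ) (I : Finset ℕ) (d : ℕ →₀ ℕ) : Finset (Fin n → ℕ) :=
  (Fintype.piFinset fun _ => d.support).filter fun g =>
    (∀ j k : Fin n, j ≤ k → g j ≤ g k) ∧ (∀ j, 1 ≤ g j) ∧
    (∀ j ∈ peakOf I, fget g (j - 1) < fget g (j + 1)) ∧ monomialOf g = d

/-- The `q`-fundamental quasisymmetric function `L^{(q)}_{n,I}`, as a formal power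
series in the variables `x_1, x_2, …` (defined coefficientwise). -/
noncomputable def Lq (q : ℂ) (n : ℕ) (I : Finset ℕ) : MvPowerSeries ℕ ℂ :=
  fun d => ∑ g ∈ Lseqs n I d,
    q ^ (I.filter fun j => fget g j = fget g (j + 1)).card *
      (q + 1) ^ (Finset.image g Finset.univ).card

/-- The weakly increasing sequences of positive integers of length `s` with
`i_j = i_{j+1}` for all `j ∈ I`, with monomial `d`. -/
noncomputable def etaSeqs (s : ℕ) (I : Finset ℕ) (d : ℕ →₀ ℕ) : Finset (Fin s → ℕ) :=
  (Fintype.piFinset fun _ => d.support).filter fun g =>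
    (∀ j k : Fin s, j ≤ k → g j ≤ g k) ∧ (∀ j, 1 ≤ g j) ∧
    (∀ j ∈ I, fget g j = fget g (j + 1)) ∧ monomialOf g = d

/-- The enriched `q`-monomial quasisymmetric function `η^{(q)}_{s,I}`. -/
noncomputable def etaq (q : ℂ) (s : ℕ) (I : Finset ℕ) : MvPowerSeries ℕ ℂ :=
  fun d => ∑ g ∈ etaSeqs s I d, (q + 1) ^ (Finset.image g Finset.univ).card

/-- `I` is a `p`-extended peak set: `I ∪ {0}` contains no `p + 1` consecutive integers. -/
def IsExtPeakSet (p : ℕ) (I : Finset ℕ) : Prop :=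
  ∀ a : ℕ, ¬ Finset.Icc a (a + p) ⊆ insert 0 I

/-- `s^{(p)}_n`: the number of `p`-extended peak subsets of `[n-1]`, with `s^{(p)}_0 = 0`. -/
noncomputable def sCount (p n : ℕ) : ℕ :=
  if n = 0 then 0
  else ((Finset.Icc 1 (n - 1)).powerset.filter fun I => IsExtPeakSet p I).card

/-- The value `π(j)` of the permutation at the (1-indexed) position `j`,
as an element of `{1, …, n}`. -/
def pval {n : ℕ} (π : Equiv.Perm (Fin n)) (j : ℕ) : ℕ :=
  if h : j - 1 < n then (π ⟨j - 1, h⟩ : ℕ) + 1 else 0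

/-- The descent set `Des(π) = {1 ≤ i ≤ n-1 : π(i) > π(i+1)}`. -/
def desSet {n : ℕ} (π : Equiv.Perm (Fin n)) : Finset ℕ :=
  (Finset.Icc 1 (n - 1)).filter fun i => pval π (i + 1) < pval π i

/-- The peak set `Peak(π) = {2 ≤ i ≤ n-1 : π(i-1) < π(i) > π(i+1)}`. -/
def peakSet {n : ℕ} (π : Equiv.Perm (Fin n)) : Finset ℕ :=
  (Finset.Icc 2 (n - 1)).filter fun i =>
    pval π (i - 1) < pval π i ∧ pval π (i + 1) < pval π i

/-- The `p`-extended peak set `Peak_p(π)` of a permutation: the descents `i` such that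
`i ≤ p - 1` or some position `i - j` (with `1 ≤ j ≤ p` and `i - j ≥ 1`) is not a descent. -/
def peakP {n : ℕ} (p : ℕ) (π : Equiv.Perm (Fin n)) : Finset ℕ :=
  (desSet π).filter fun i =>
    i ≤ p - 1 ∨ ∃ j ∈ Finset.Icc 1 p, 1 ≤ i - j ∧ i - j ∉ desSet π

/-- `ρ_p = exp(-iπ(p-1)/(p+1))`. -/
noncomputable def rho (p : ℕ) : ℂ :=
  Complex.exp (-((Real.pi : ℂ) * ((p : ℂ) - 1) / ((p : ℂ) + 1)) * Complex.I)

/-- `[m]_c = 1 + c + ⋯ + c^(m-1)`. -/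
noncomputable def qint (m : ℕ) (c : ℂ) : ℂ := ∑ j ∈ Finset.range m, c ^ j

/-- The entry of the transition matrix `B^{(q)}` at row `J`, column `I`:
`Σ (-q)^{|K|} (q-1)^{|J'|}` over pairs `(J', K)` with `J' ⊆ I`, `K ⊆ Peak(I)`,
`J' ∩ K = ∅` and `J' ∪ (K-1) ∪ K = J`. -/
noncomputable def Bentry (q : ℂ) (J I : Finset ℕ) : ℂ :=
  ∑ J' ∈ I.powerset, ∑ K ∈ (peakOf I).powerset,
    if Disjoint J' K ∧ J' ∪ K.image (· - 1) ∪ K = J then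
      (-q) ^ K.card * (q - 1) ^ J'.card
    else 0

/-- The collection of all subsets of `[n-1]` (the empty collection when `n = 0`,
so that `B_0` is the empty matrix). -/
def subsetsOf (n : ℕ) : Finset (Finset ℕ) :=
  if n = 0 then ∅ else (Finset.Icc 1 (n - 1)).powerset

/-- The matrix `B_n^{(q)}`, with rows and columns indexed by the subsets of `[n-1]`. -/
noncomputable def Bmat (q : ℂ) (n : ℕ) : Matrix ↥(subsetsOf n) ↥(subsetsOf n) ℂ :=
  fun J I => Bentry q J.1 I.1

/-- The entry of `A_n^{(q)}` at row `J'`, column `I'`, namely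
`B_n^{(q)}(J' ∪ {n-1}, I' ∪ {n-1})`. -/
noncomputable def Aentry (q : ℂ) (n : ℕ) (J I : Finset ℕ) : ℂ :=
  Bentry q (insert (n - 1) J) (insert (n - 1) I)

/-- The matrix `A_{m+1}^{(q)}`, with rows and columns indexed by the subsets of `[m-1]`
(the index set of `A_n^{(q)}` consists of the subsets of `[n-2]`). -/
noncomputable def AmatSucc (q : ℂ) (m : ℕ) : Matrix ↥(subsetsOf m) ↥(subsetsOf m) ℂ :=
  fun J I => Aentry q (m + 1) J.1 I.1

/-- The dimension of the kernel of (the linear map associated with) `B_n^{(q)}`. -/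
noncomputable def dimKer (q : ℂ) (n : ℕ) : ℕ :=
  Module.finrank ℂ (LinearMap.ker (Matrix.mulVecLin (Bmat q n)))

lemma mem_peakOf {I : Finset ℕ} {i : ℕ} :
    i ∈ peakOf I ↔ i ∈ I ∧ 2 ≤ i ∧ i - 1 ∉ I := by
  simp [peakOf]

lemma Bentry_eq (q : ℂ) (J I : Finset ℕ) :
    Bentry q J I = ∑ p ∈ (I.powerset ×ˢ (peakOf I).powerset).filter
      (fun p => Disjoint p.1 p.2 ∧ p.1 ∪ p.2.image (· - 1) ∪ p.2 = J),
      (-q) ^ p.2.card * (q - 1) ^ p.1.card := by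
  rw [Finset.sum_filter, Finset.sum_product]
  rfl

lemma peak_insert₁ {a : ℕ} {I : Finset ℕ} {k : ℕ}
    (hk : k ∈ peakOf (insert a I)) (hka : k ≠ a) : k ∈ peakOf I := by
  rw [mem_peakOf] at hk ⊢
  exact ⟨(Finset.mem_insert.mp hk.1).resolve_left hka, hk.2.1,
    fun h => hk.2.2 (Finset.mem_insert_of_mem h)⟩

lemma peak_insert₂ {a : ℕ} {I : Finset ℕ} (ha1I : a + 1 ∉ I) {k : ℕ}
    (hk : k ∈ peakOf I) : k ∈ peakOf (insert a I) := by
  rw [mem_peakOf] at hk ⊢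
  refine ⟨Finset.mem_insert_of_mem hk.1, hk.2.1, fun h => ?_⟩
  rcases Finset.mem_insert.mp h with h | h
  · have hk1 : k = a + 1 := by omega
    exact ha1I (hk1 ▸ hk.1)
  · exact hk.2.2 h

/-- F2 -/
lemma Bentry_insert_col (q : ℂ) (a : ℕ) (J I : Finset ℕ)
    (haI : a ∉ I) (ha1I : a + 1 ∉ I) (haJ : a ∉ J) :
    Bentry q J (insert a I) = Bentry q J I := by
  rw [Bentry_eq, Bentry_eq]
  apply Finset.sum_congr _ (fun _ _ => rfl)
  ext p
  simp only [Finset.mem_filter, Finset.mem_product, Finset.mem_powerset]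
  constructor
  · rintro ⟨⟨h1, h2⟩, hd, hu⟩
    have haJ' : a ∉ p.1 := fun h => haJ (by
      rw [← hu]; exact mem_union_left _ (mem_union_left _ h))
    have haK : a ∉ p.2 := fun h => haJ (by rw [← hu]; exact mem_union_right _ h)
    refine ⟨⟨fun x hx => ?_, fun k hk => ?_⟩, hd, hu⟩
    · rcases Finset.mem_insert.mp (h1 hx) with h | h
      · exact absurd (h ▸ hx) haJ'
      · exact h
    · exact peak_insert₁ (h2 hk) (fun h => haK (h ▸ hk))
  · rintro ⟨⟨h1, h2⟩, hd, hu⟩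
    exact ⟨⟨h1.trans (Finset.subset_insert _ _),
      fun k hk => peak_insert₂ ha1I (h2 hk)⟩, hd, hu⟩

/-- F3 -/
lemma Bentry_eq_zero (q : ℂ) (a : ℕ) (J I : Finset ℕ)
    (haI : a ∉ I) (ha1I : a + 1 ∉ I) (haJ : a ∈ J) :
    Bentry q J I = 0 := by
  rw [Bentry]
  refine Finset.sum_eq_zero fun J' hJ' => Finset.sum_eq_zero fun K hK => ?_
  rw [if_neg]
  rintro ⟨hd, hu⟩
  rw [← hu] at haJ
  simp only [Finset.mem_union, Finset.mem_image] at haJ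
  rcases haJ with (h | ⟨k, hk, hk1⟩) | h
  · exact haI (Finset.mem_powerset.mp hJ' h)
  · have hkI := mem_peakOf.mp (Finset.mem_powerset.mp hK hk)
    have hk2 : k = a + 1 := by omega
    exact ha1I (hk2 ▸ hkI.1)
  · exact haI (mem_peakOf.mp (Finset.mem_powerset.mp hK h)).1

/-- F1 -/
lemma Bentry_insert_both (q : ℂ) (a : ℕ) (J I : Finset ℕ) (ha : 1 ≤ a)
    (haI : a ∉ I) (ha1I : a + 1 ∉ I) (haJ : a ∉ J)
    (hcov : a - 1 ∉ J ∨ a - 1 ∈ I) :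
    Bentry q (insert a J) (insert a I) = (q - 1) * Bentry q J I := by
  rw [Bentry_eq, Bentry_eq, Finset.mul_sum]
  have hmem : ∀ p : Finset ℕ × Finset ℕ,
      p.1 ⊆ insert a I → p.2 ⊆ peakOf (insert a I) → Disjoint p.1 p.2 →
      p.1 ∪ p.2.image (· - 1) ∪ p.2 = insert a J →
      a ∈ p.1 ∧ a ∉ p.2 ∧ a ∉ p.2.image (· - 1) := by
    intro p h1 h2 hd hu
    have hK1 : a ∉ p.2.image (· - 1) := by
      simp only [Finset.mem_image]
      rintro ⟨k, hk, hk1⟩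
      have hkP := mem_peakOf.mp (h2 hk)
      have hke : k = a + 1 := by omega
      subst hke
      rcases Finset.mem_insert.mp hkP.1 with h | h
      · omega
      · exact ha1I h
    have hK : a ∉ p.2 := by
      intro h
      have hP := mem_peakOf.mp (h2 h)
      have ha1 : a - 1 ∉ I := fun hc => hP.2.2 (Finset.mem_insert_of_mem hc)
      have haJ1 : a - 1 ∉ J := hcov.resolve_right ha1
      have hm : a - 1 ∈ insert a J := by
        rw [← hu]
        exact mem_union_left _ (mem_union_right _ (Finset.mem_image.mpr ⟨a, h, rfl⟩))
      have h2a := hP.2.1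
      rcases Finset.mem_insert.mp hm with hc | hc
      · omega
      · exact haJ1 hc
    have hin : a ∈ insert a J := Finset.mem_insert_self _ _
    rw [← hu] at hin
    rcases Finset.mem_union.mp hin with h | h
    · rcases Finset.mem_union.mp h with h | h
      · exact ⟨h, hK, hK1⟩
      · exact absurd h hK1
    · exact absurd h hK
  refine Finset.sum_nbij' (i := fun p => (p.1.erase a, p.2))
    (j := fun p => (insert a p.1, p.2)) ?_ ?_ ?_ ?_ ?_
  · rintro ⟨J', K⟩ hp
    simp only [Finset.mem_filter, Finset.mem_product, Finset.mem_powerset] at hp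
    obtain ⟨⟨h1, h2⟩, hd, hu⟩ := hp
    obtain ⟨haJ', haK, haK1⟩ := hmem (J', K) h1 h2 hd hu
    simp only [Finset.mem_filter, Finset.mem_product, Finset.mem_powerset]
    refine ⟨⟨fun x hx => ?_, fun k hk => peak_insert₁ (h2 hk) (fun h => haK (h ▸ hk))⟩,
      Finset.disjoint_of_subset_left (Finset.erase_subset _ _) hd, ?_⟩
    · rcases Finset.mem_insert.mp (h1 (Finset.mem_of_mem_erase hx)) with h | h
      · exact absurd h (Finset.ne_of_mem_erase hx)
      · exact h
    · ext x
      have hux := Finset.ext_iff.mp hu x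
      simp only [Finset.mem_union, Finset.mem_insert] at hux
      simp only [Finset.mem_union, Finset.mem_erase]
      by_cases hx : x = a
      · subst hx
        simp only [ne_eq, not_true_eq_false, false_and, false_or]
        constructor
        · rintro (h | h)
          · exact absurd h haK1
          · exact absurd h haK
        · intro h; exact absurd h haJ
      · constructor
        · rintro ((⟨_, h⟩ | h) | h) <;> tauto
        · intro h
          have := hux.mpr (Or.inr h)
          tauto
  · rintro ⟨J', K⟩ hp
    simp only [Finset.mem_filter, Finset.mem_product, Finset.mem_powerset] at hp
    obtain ⟨⟨h1, h2⟩, hd, hu⟩ := hp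
    have haK : a ∉ K := fun h => haI (mem_peakOf.mp (h2 h)).1
    simp only [Finset.mem_filter, Finset.mem_product, Finset.mem_powerset]
    refine ⟨⟨Finset.insert_subset_insert _ h1, fun k hk => peak_insert₂ ha1I (h2 hk)⟩,
      (Finset.disjoint_insert_left).mpr ⟨haK, hd⟩, ?_⟩
    ext x
    have hux := Finset.ext_iff.mp hu x
    simp only [Finset.mem_union] at hux
    simp only [Finset.mem_union, Finset.mem_insert]
    by_cases hx : x = a
    · subst hx; tauto
    · tauto
  · rintro ⟨J', K⟩ hp
    simp only [Finset.mem_filter, Finset.mem_product, Finset.mem_powerset] at hp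
    obtain ⟨⟨h1, h2⟩, hd, hu⟩ := hp
    obtain ⟨haJ', _, _⟩ := hmem (J', K) h1 h2 hd hu
    simp only [Prod.mk.injEq]
    exact ⟨Finset.insert_erase haJ', trivial⟩
  · rintro ⟨J', K⟩ hp
    simp only [Finset.mem_filter, Finset.mem_product, Finset.mem_powerset] at hp
    obtain ⟨⟨h1, _⟩, _, _⟩ := hp
    have : a ∉ J' := fun h => haI (h1 h)
    simp only [Prod.mk.injEq]
    exact ⟨Finset.erase_insert this, trivial⟩
  · rintro ⟨J', K⟩ hp
    simp only [Finset.mem_filter, Finset.mem_product, Finset.mem_powerset] at hp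
    obtain ⟨⟨h1, h2⟩, hd, hu⟩ := hp
    obtain ⟨haJ', _, _⟩ := hmem (J', K) h1 h2 hd hu
    show (-q) ^ K.card * (q - 1) ^ J'.card =
      (q - 1) * ((-q) ^ K.card * (q - 1) ^ (J'.erase a).card)
    rw [← Finset.card_erase_add_one haJ', pow_succ]
    ring

/-- F4 -/
lemma Bentry_insert_peak (q : ℂ) (a : ℕ) (J I : Finset ℕ) (ha : 2 ≤ a)
    (haI : a ∉ I) (ha1I : a + 1 ∉ I) (ham1I : a - 1 ∉ I)
    (haJ : a ∉ J) (ham1J : a - 1 ∉ J) :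
    Bentry q (insert a (insert (a - 1) J)) (insert a I) = (-q) * Bentry q J I := by
  rw [Bentry_eq, Bentry_eq, Finset.mul_sum]
  have hmem : ∀ p : Finset ℕ × Finset ℕ,
      p.1 ⊆ insert a I → p.2 ⊆ peakOf (insert a I) → Disjoint p.1 p.2 →
      p.1 ∪ p.2.image (· - 1) ∪ p.2 = insert a (insert (a - 1) J) →
      a ∈ p.2 ∧ a ∉ p.1 ∧ a - 1 ∉ p.1 ∧ a - 1 ∉ p.2 ∧ a + 1 ∉ p.2 := by
    intro p h1 h2 hd hu
    have hm1K : a - 1 ∉ p.2 := fun h => ham1I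
      ((Finset.mem_insert.mp (mem_peakOf.mp (h2 h)).1).resolve_left (by omega))
    have hm1J' : a - 1 ∉ p.1 := fun h =>
      ham1I ((Finset.mem_insert.mp (h1 h)).resolve_left (by omega))
    have hp1K : a + 1 ∉ p.2 := fun h => ha1I
      ((Finset.mem_insert.mp (mem_peakOf.mp (h2 h)).1).resolve_left (by omega))
    have hin : a - 1 ∈ insert a (insert (a - 1) J) :=
      Finset.mem_insert_of_mem (Finset.mem_insert_self _ _)
    rw [← hu] at hin
    have haK : a ∈ p.2 := by
      rcases Finset.mem_union.mp hin with h | h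
      · rcases Finset.mem_union.mp h with h | h
        · exact absurd h hm1J'
        · obtain ⟨k, hk, hk1⟩ := Finset.mem_image.mp h
          have h2k := (mem_peakOf.mp (h2 hk)).2.1
          have hke : k = a := by omega
          exact hke ▸ hk
      · exact absurd h hm1K
    exact ⟨haK, fun h => (Finset.disjoint_left.mp hd h) haK, hm1J', hm1K, hp1K⟩
  refine Finset.sum_nbij' (i := fun p => (p.1, p.2.erase a))
    (j := fun p => (p.1, insert a p.2)) ?_ ?_ ?_ ?_ ?_
  · rintro ⟨J', K⟩ hp
    simp only [Finset.mem_filter, Finset.mem_product, Finset.mem_powerset] at hp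
    obtain ⟨⟨h1, h2⟩, hd, hu⟩ := hp
    obtain ⟨haK, haJ', hm1J', hm1K, hp1K⟩ := hmem (J', K) h1 h2 hd hu
    simp only [Finset.mem_filter, Finset.mem_product, Finset.mem_powerset]
    refine ⟨⟨fun x hx => (Finset.mem_insert.mp (h1 hx)).resolve_left
        (fun h => haJ' (h ▸ hx)), fun k hk =>
        peak_insert₁ (h2 (Finset.mem_of_mem_erase hk)) (Finset.ne_of_mem_erase hk)⟩,
      Finset.disjoint_of_subset_right (Finset.erase_subset _ _) hd, ?_⟩
    ext x
    have hux := Finset.ext_iff.mp hu x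
    simp only [Finset.mem_union, Finset.mem_insert, Finset.mem_image] at hux
    simp only [Finset.mem_union, Finset.mem_image, Finset.mem_erase]
    constructor
    · rintro ((h | ⟨k, ⟨hka, hk⟩, hk1⟩) | ⟨hxa, hx⟩)
      · rcases hux.mp (Or.inl (Or.inl h)) with h' | h' | h'
        · exact absurd (h' ▸ h) haJ'
        · exact absurd (h' ▸ h) hm1J'
        · exact h'
      · have h2k := (mem_peakOf.mp (h2 hk)).2.1
        rcases hux.mp (Or.inl (Or.inr ⟨k, hk, hk1⟩)) with h' | h' | h'
        · have hke : k = a + 1 := by omega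
          exact absurd (hke ▸ hk) hp1K
        · have hke : k = a := by omega
          exact absurd hke hka
        · exact h'
      · rcases hux.mp (Or.inr hx) with h' | h' | h'
        · exact absurd h' hxa
        · exact absurd (h' ▸ hx) hm1K
        · exact h'
    · intro hxJ
      rcases hux.mpr (Or.inr (Or.inr hxJ)) with (h | ⟨k, hk, hk1⟩) | h
      · exact Or.inl (Or.inl h)
      · refine Or.inl (Or.inr ⟨k, ⟨?_, hk⟩, hk1⟩)
        intro h'
        subst h'
        subst hk1
        exact ham1J hxJ
      · exact Or.inr ⟨fun h' => haJ (h' ▸ hxJ), h⟩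
  · rintro ⟨J', K⟩ hp
    simp only [Finset.mem_filter, Finset.mem_product, Finset.mem_powerset] at hp
    obtain ⟨⟨h1, h2⟩, hd, hu⟩ := hp
    have haK : a ∉ K := fun h => haI (mem_peakOf.mp (h2 h)).1
    have haJ' : a ∉ J' := fun h => haI (h1 h)
    simp only [Finset.mem_filter, Finset.mem_product, Finset.mem_powerset]
    refine ⟨⟨h1.trans (Finset.subset_insert _ _), Finset.insert_subset
        (mem_peakOf.mpr ⟨Finset.mem_insert_self _ _, ha, fun h => ?_⟩)
        (fun k hk => peak_insert₂ ha1I (h2 hk))⟩,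
      (Finset.disjoint_insert_right).mpr ⟨haJ', hd⟩, ?_⟩
    · rcases Finset.mem_insert.mp h with h | h
      · omega
      · exact ham1I h
    · ext x
      have hux := Finset.ext_iff.mp hu x
      simp only [Finset.mem_union] at hux
      simp only [Finset.image_insert, Finset.mem_union, Finset.mem_insert]
      tauto
  · rintro ⟨J', K⟩ hp
    simp only [Finset.mem_filter, Finset.mem_product, Finset.mem_powerset] at hp
    obtain ⟨⟨h1, h2⟩, hd, hu⟩ := hp
    obtain ⟨haK, _, _, _, _⟩ := hmem (J', K) h1 h2 hd hu
    simp only [Prod.mk.injEq]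
    exact ⟨trivial, Finset.insert_erase haK⟩
  · rintro ⟨J', K⟩ hp
    simp only [Finset.mem_filter, Finset.mem_product, Finset.mem_powerset] at hp
    obtain ⟨⟨h1, h2⟩, _, _⟩ := hp
    have haK : a ∉ K := fun h => haI (mem_peakOf.mp (h2 h)).1
    simp only [Prod.mk.injEq]
    exact ⟨trivial, Finset.erase_insert haK⟩
  · rintro ⟨J', K⟩ hp
    simp only [Finset.mem_filter, Finset.mem_product, Finset.mem_powerset] at hp
    obtain ⟨⟨h1, h2⟩, hd, hu⟩ := hp
    obtain ⟨haK, _, _, _, _⟩ := hmem (J', K) h1 h2 hd hu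
    show (-q) ^ K.card * (q - 1) ^ J'.card =
      (-q) * ((-q) ^ (K.erase a).card * (q - 1) ^ J'.card)
    rw [← Finset.card_erase_add_one haK, pow_succ]
    ring

/-- extension of a subtype-indexed vector to all finsets -/
noncomputable def Xext {n : ℕ} (X : ↥(subsetsOf n) → ℂ) (S : Finset ℕ) : ℂ :=
  if h : S ∈ subsetsOf n then X ⟨S, h⟩ else 0

lemma mem_subsetsOf {n : ℕ} (hn : 1 ≤ n) {S : Finset ℕ} :
    S ∈ subsetsOf n ↔ ∀ x ∈ S, 1 ≤ x ∧ x ≤ n - 1 := by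
  rw [subsetsOf, if_neg (by omega), Finset.mem_powerset]
  constructor
  · intro h x hx
    have := h hx
    rw [Finset.mem_Icc] at this
    exact this
  · intro h x hx
    rw [Finset.mem_Icc]
    exact h x hx

lemma mulVec_apply {n : ℕ} (E : Finset ℕ → Finset ℕ → ℂ)
    (X : ↥(subsetsOf n) → ℂ) (j : ↥(subsetsOf n)) :
    Matrix.mulVec (fun J I : ↥(subsetsOf n) => E J.1 I.1) X j
      = ∑ I ∈ subsetsOf n, E j.1 I * Xext X I := by
  simp only [Matrix.mulVec, dotProduct]
  rw [Finset.univ_eq_attach,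
    ← Finset.sum_attach (subsetsOf n) (fun I => E j.1 I * Xext X I)]
  apply Finset.sum_congr rfl
  intro i _
  rw [Xext, dif_pos i.2]

lemma Bmat_mulVec_apply (q : ℂ) {n : ℕ} (X : ↥(subsetsOf n) → ℂ)
    (S : Finset ℕ) (hS : S ∈ subsetsOf n) :
    (Bmat q n).mulVec X ⟨S, hS⟩ = ∑ I ∈ subsetsOf n, Bentry q S I * Xext X I :=
  mulVec_apply (Bentry q) X ⟨S, hS⟩

lemma Amat_mulVec_apply (q : ℂ) {n : ℕ} (X : ↥(subsetsOf n) → ℂ)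
    (S : Finset ℕ) (hS : S ∈ subsetsOf n) :
    (AmatSucc q n).mulVec X ⟨S, hS⟩
      = ∑ I ∈ subsetsOf n, Bentry q (insert n S) (insert n I) * Xext X I := by
  have h : AmatSucc q n = fun J I : ↥(subsetsOf n) =>
      (fun S T => Bentry q (insert n S) (insert n T)) J.1 I.1 := by
    funext J I
    simp only [AmatSucc, Aentry, Nat.add_sub_cancel]
  rw [h]
  exact mulVec_apply (fun S T => Bentry q (insert n S) (insert n T)) X ⟨S, hS⟩

lemma sum_subsetsOf_split {n : ℕ} (hn : 2 ≤ n) (g : Finset ℕ → ℂ) :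
    ∑ I ∈ subsetsOf n, g I
      = ∑ I ∈ subsetsOf (n - 1), g I
        + ∑ I ∈ subsetsOf (n - 1), g (insert (n - 1) I) := by
  have h1 : subsetsOf n = (Finset.Icc 1 (n - 1)).powerset := by
    rw [subsetsOf, if_neg (by omega)]
  have h2 : subsetsOf (n - 1) = (Finset.Icc 1 (n - 2)).powerset := by
    rw [subsetsOf, if_neg (by omega), show n - 1 - 1 = n - 2 from by omega]
  have hIcc : Finset.Icc 1 (n - 1) = insert (n - 1) (Finset.Icc 1 (n - 2)) := by
    ext x
    simp only [Finset.mem_Icc, Finset.mem_insert]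
    omega
  have hnm : n - 1 ∉ Finset.Icc 1 (n - 2) := by
    simp only [Finset.mem_Icc]
    omega
  have hdisj : Disjoint (Finset.Icc 1 (n - 2)).powerset
      ((Finset.Icc 1 (n - 2)).powerset.image (insert (n - 1))) := by
    rw [Finset.disjoint_left]
    intro T hT hT'
    obtain ⟨T', _, rfl⟩ := Finset.mem_image.mp hT'
    exact hnm (Finset.mem_powerset.mp hT (Finset.mem_insert_self _ _))
  have hinj : ∀ x ∈ (Finset.Icc 1 (n - 2)).powerset,
      ∀ y ∈ (Finset.Icc 1 (n - 2)).powerset, insert (n - 1) x = insert (n - 1) y → x = y := by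
    intro x hx y hy hxy
    have hx' : n - 1 ∉ x := fun h => hnm (Finset.mem_powerset.mp hx h)
    have hy' : n - 1 ∉ y := fun h => hnm (Finset.mem_powerset.mp hy h)
    rw [← Finset.erase_insert hx', ← Finset.erase_insert hy', hxy]
  rw [h1, h2, hIcc, Finset.powerset_insert, Finset.sum_union hdisj]
  rw [Finset.sum_image hinj]


lemma row_noinsert (q α β : ℂ) {n : ℕ} (hn : 2 ≤ n) (X : ↥(subsetsOf n) → ℂ)
    {J : Finset ℕ} (hJ : J ∈ subsetsOf (n - 1)) (hJn : J ∈ subsetsOf n) :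
    (α • AmatSucc q n + β • Bmat q n).mulVec X ⟨J, hJn⟩
      = ((q - 1) * α + β) * ∑ I ∈ subsetsOf (n - 1),
          Bentry q J I * (Xext X I + Xext X (insert (n - 1) I)) := by
  have hbJ := (mem_subsetsOf (show (1:ℕ) ≤ n - 1 by omega)).mp hJ
  rw [Matrix.add_mulVec, Matrix.smul_mulVec, Matrix.smul_mulVec]
  simp only [Pi.add_apply, Pi.smul_apply, smul_eq_mul]
  rw [Amat_mulVec_apply q X J hJn, Bmat_mulVec_apply q X J hJn]
  rw [sum_subsetsOf_split hn, sum_subsetsOf_split hn]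
  have e1 : ∑ I ∈ subsetsOf (n - 1), Bentry q (insert n J) (insert n I) * Xext X I
      = (q - 1) * ∑ I ∈ subsetsOf (n - 1), Bentry q J I * Xext X I := by
    rw [Finset.mul_sum]
    refine Finset.sum_congr rfl fun I hI => ?_
    have hbI := (mem_subsetsOf (show (1:ℕ) ≤ n - 1 by omega)).mp hI
    rw [Bentry_insert_both q n J I (by omega)
      (fun h => by have := hbI n h; omega)
      (fun h => by have := hbI (n + 1) h; omega)
      (fun h => by have := hbJ n h; omega)
      (Or.inl (fun h => by have := hbJ (n - 1) h; omega))]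
    ring
  have e2 : ∑ I ∈ subsetsOf (n - 1),
        Bentry q (insert n J) (insert n (insert (n - 1) I)) * Xext X (insert (n - 1) I)
      = (q - 1) * ∑ I ∈ subsetsOf (n - 1), Bentry q J I * Xext X (insert (n - 1) I) := by
    rw [Finset.mul_sum]
    refine Finset.sum_congr rfl fun I hI => ?_
    have hbI := (mem_subsetsOf (show (1:ℕ) ≤ n - 1 by omega)).mp hI
    have hbI' : ∀ x ∈ insert (n - 1) I, 1 ≤ x ∧ x ≤ n - 1 := by
      intro x hx
      rcases Finset.mem_insert.mp hx with h | h
      · omega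
      · have := hbI x h; omega
    rw [Bentry_insert_both q n J (insert (n - 1) I) (by omega)
      (fun h => by have := hbI' n h; omega)
      (fun h => by have := hbI' (n + 1) h; omega)
      (fun h => by have := hbJ n h; omega)
      (Or.inr (Finset.mem_insert_self _ _))]
    rw [Bentry_insert_col q (n - 1) J I
      (fun h => by have := hbI (n - 1) h; omega)
      (fun h => by have := hbI (n - 1 + 1) h; omega)
      (fun h => by have := hbJ (n - 1) h; omega)]
    ring
  have e3 : ∑ I ∈ subsetsOf (n - 1), Bentry q J (insert (n - 1) I) * Xext X (insert (n - 1) I)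
      = ∑ I ∈ subsetsOf (n - 1), Bentry q J I * Xext X (insert (n - 1) I) := by
    refine Finset.sum_congr rfl fun I hI => ?_
    have hbI := (mem_subsetsOf (show (1:ℕ) ≤ n - 1 by omega)).mp hI
    rw [Bentry_insert_col q (n - 1) J I
      (fun h => by have := hbI (n - 1) h; omega)
      (fun h => by have := hbI (n - 1 + 1) h; omega)
      (fun h => by have := hbJ (n - 1) h; omega)]
  have e4 : ∑ I ∈ subsetsOf (n - 1), Bentry q J I * (Xext X I + Xext X (insert (n - 1) I))
      = (∑ I ∈ subsetsOf (n - 1), Bentry q J I * Xext X I)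
        + ∑ I ∈ subsetsOf (n - 1), Bentry q J I * Xext X (insert (n - 1) I) := by
    rw [← Finset.sum_add_distrib]
    exact Finset.sum_congr rfl fun I _ => by ring
  rw [e1, e2, e3, e4]
  ring

lemma row_insert (q α β : ℂ) {n : ℕ} (hn : 2 ≤ n) (X : ↥(subsetsOf n) → ℂ)
    {J : Finset ℕ} (hJ : J ∈ subsetsOf (n - 1)) (hJn : insert (n - 1) J ∈ subsetsOf n) :
    (α • AmatSucc q n + β • Bmat q n).mulVec X ⟨insert (n - 1) J, hJn⟩
      = (-(q * α)) * (∑ I ∈ subsetsOf (n - 1), Bentry q J I * Xext X I)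
        + ((q - 1) * α + β) * ∑ I ∈ subsetsOf (n - 1),
            Bentry q (insert (n - 1) J) (insert (n - 1) I) * Xext X (insert (n - 1) I) := by
  have hbJ := (mem_subsetsOf (show (1:ℕ) ≤ n - 1 by omega)).mp hJ
  rw [Matrix.add_mulVec, Matrix.smul_mulVec, Matrix.smul_mulVec]
  simp only [Pi.add_apply, Pi.smul_apply, smul_eq_mul]
  rw [Amat_mulVec_apply q X (insert (n - 1) J) hJn,
    Bmat_mulVec_apply q X (insert (n - 1) J) hJn]
  rw [sum_subsetsOf_split hn, sum_subsetsOf_split hn]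
  have e1 : ∑ I ∈ subsetsOf (n - 1),
        Bentry q (insert n (insert (n - 1) J)) (insert n I) * Xext X I
      = (-q) * ∑ I ∈ subsetsOf (n - 1), Bentry q J I * Xext X I := by
    rw [Finset.mul_sum]
    refine Finset.sum_congr rfl fun I hI => ?_
    have hbI := (mem_subsetsOf (show (1:ℕ) ≤ n - 1 by omega)).mp hI
    rw [Bentry_insert_peak q n J I hn
      (fun h => by have := hbI n h; omega)
      (fun h => by have := hbI (n + 1) h; omega)
      (fun h => by have := hbI (n - 1) h; omega)
      (fun h => by have := hbJ n h; omega)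
      (fun h => by have := hbJ (n - 1) h; omega)]
    ring
  have e2 : ∑ I ∈ subsetsOf (n - 1),
        Bentry q (insert n (insert (n - 1) J)) (insert n (insert (n - 1) I))
          * Xext X (insert (n - 1) I)
      = (q - 1) * ∑ I ∈ subsetsOf (n - 1),
          Bentry q (insert (n - 1) J) (insert (n - 1) I) * Xext X (insert (n - 1) I) := by
    rw [Finset.mul_sum]
    refine Finset.sum_congr rfl fun I hI => ?_
    have hbI := (mem_subsetsOf (show (1:ℕ) ≤ n - 1 by omega)).mp hI
    have hbI' : ∀ x ∈ insert (n - 1) I, 1 ≤ x ∧ x ≤ n - 1 := by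
      intro x hx
      rcases Finset.mem_insert.mp hx with h | h
      · omega
      · have := hbI x h; omega
    have hbJ' : ∀ x ∈ insert (n - 1) J, 1 ≤ x ∧ x ≤ n - 1 := by
      intro x hx
      rcases Finset.mem_insert.mp hx with h | h
      · omega
      · have := hbJ x h; omega
    rw [Bentry_insert_both q n (insert (n - 1) J) (insert (n - 1) I) (by omega)
      (fun h => by have := hbI' n h; omega)
      (fun h => by have := hbI' (n + 1) h; omega)
      (fun h => by have := hbJ' n h; omega)
      (Or.inr (Finset.mem_insert_self _ _))]
    ring
  have e3 : ∑ I ∈ subsetsOf (n - 1), Bentry q (insert (n - 1) J) I * Xext X I = 0 := by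
    refine Finset.sum_eq_zero fun I hI => ?_
    have hbI := (mem_subsetsOf (show (1:ℕ) ≤ n - 1 by omega)).mp hI
    rw [Bentry_eq_zero q (n - 1) (insert (n - 1) J) I
      (fun h => by have := hbI (n - 1) h; omega)
      (fun h => by have := hbI (n - 1 + 1) h; omega)
      (Finset.mem_insert_self _ _)]
    ring
  rw [e1, e2, e3]
  ring


/-- Kernel recurrence equation: for `n ≥ 2` and a vector `X` indexed by
the subsets of `[n-1]`, with `X¹` its restriction to the subsets of `[n-2]` and
`X²(S) = X(S ∪ {n-1})`, one has `(α·A_{n+1}^{(q)} + β·B_n^{(q)})X = 0` iff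
`((q-1)α+β)·B_{n-1}^{(q)}(X¹+X²) = 0` and
`-qα·B_{n-1}^{(q)}X¹ + ((q-1)α+β)·A_n^{(q)}X² = 0`. -/
theorem kernel_recurrence_equation (q α β : ℂ) (n : ℕ) (hn : 2 ≤ n)
    (X : ↥(subsetsOf n) → ℂ) (X1 X2 : ↥(subsetsOf (n - 1)) → ℂ)
    (hX1 : ∀ (S : Finset ℕ) (hS : S ∈ subsetsOf (n - 1)) (hS' : S ∈ subsetsOf n),
      X1 ⟨S, hS⟩ = X ⟨S, hS'⟩)
    (hX2 : ∀ (S : Finset ℕ) (hS : S ∈ subsetsOf (n - 1))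
        (hS' : insert (n - 1) S ∈ subsetsOf n),
      X2 ⟨S, hS⟩ = X ⟨insert (n - 1) S, hS'⟩) :
    (α • AmatSucc q n + β • Bmat q n).mulVec X = 0 ↔
      (((q - 1) * α + β) • (Bmat q (n - 1)).mulVec (X1 + X2) = 0 ∧
        (-(q * α)) • (Bmat q (n - 1)).mulVec X1 +
            ((q - 1) * α + β) • (AmatSucc q (n - 1)).mulVec X2 = 0) := by
  have hsn : ∀ {S : Finset ℕ}, S ∈ subsetsOf (n - 1) → S ∈ subsetsOf n := by
    intro S hS
    rw [mem_subsetsOf (show (1:ℕ) ≤ n - 1 by omega)] at hS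
    rw [mem_subsetsOf (show (1:ℕ) ≤ n by omega)]
    intro x hx
    have := hS x hx
    omega
  have hins : ∀ {S : Finset ℕ}, S ∈ subsetsOf (n - 1) →
      insert (n - 1) S ∈ subsetsOf n := by
    intro S hS
    rw [mem_subsetsOf (show (1:ℕ) ≤ n - 1 by omega)] at hS
    rw [mem_subsetsOf (show (1:ℕ) ≤ n by omega)]
    intro x hx
    rcases Finset.mem_insert.mp hx with h | h
    · omega
    · have := hS x h
      omega
  have hx1e : ∀ I (hI : I ∈ subsetsOf (n - 1)), Xext X1 I = Xext X I := by
    intro I hI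
    rw [Xext, Xext, dif_pos hI, dif_pos (hsn hI)]
    exact hX1 I hI (hsn hI)
  have hx2e : ∀ I (hI : I ∈ subsetsOf (n - 1)),
      Xext X2 I = Xext X (insert (n - 1) I) := by
    intro I hI
    rw [Xext, Xext, dif_pos hI, dif_pos (hins hI)]
    exact hX2 I hI (hins hI)
  have hXadd : ∀ I (hI : I ∈ subsetsOf (n - 1)),
      Xext (X1 + X2) I = Xext X I + Xext X (insert (n - 1) I) := by
    intro I hI
    rw [← hx1e I hI, ← hx2e I hI, Xext, Xext, Xext,
      dif_pos hI, dif_pos hI, dif_pos hI]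
    rfl
  have key1 : ∀ (S : Finset ℕ) (hS : S ∈ subsetsOf (n - 1)),
      (((q - 1) * α + β) • (Bmat q (n - 1)).mulVec (X1 + X2)) ⟨S, hS⟩
        = (α • AmatSucc q n + β • Bmat q n).mulVec X ⟨S, hsn hS⟩ := by
    intro S hS
    rw [row_noinsert q α β hn X hS (hsn hS)]
    simp only [Pi.smul_apply, smul_eq_mul]
    rw [Bmat_mulVec_apply q (X1 + X2) S hS]
    congr 1
    refine Finset.sum_congr rfl fun I hI => ?_
    rw [hXadd I hI]
  have key2 : ∀ (S : Finset ℕ) (hS : S ∈ subsetsOf (n - 1)),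
      ((-(q * α)) • (Bmat q (n - 1)).mulVec X1
          + ((q - 1) * α + β) • (AmatSucc q (n - 1)).mulVec X2) ⟨S, hS⟩
        = (α • AmatSucc q n + β • Bmat q n).mulVec X ⟨insert (n - 1) S, hins hS⟩ := by
    intro S hS
    rw [row_insert q α β hn X hS (hins hS)]
    simp only [Pi.add_apply, Pi.smul_apply, smul_eq_mul]
    rw [Bmat_mulVec_apply q X1 S hS, Amat_mulVec_apply q X2 S hS]
    congr 1
    · congr 1
      refine Finset.sum_congr rfl fun I hI => ?_
      rw [hx1e I hI]
    · congr 1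
      refine Finset.sum_congr rfl fun I hI => ?_
      rw [hx2e I hI]
  constructor
  · intro h0
    have h0' := fun j => congrFun h0 j
    constructor
    · funext S
      obtain ⟨S, hS⟩ := S
      exact (key1 S hS).trans (h0' ⟨S, hsn hS⟩)
    · funext S
      obtain ⟨S, hS⟩ := S
      exact (key2 S hS).trans (h0' ⟨insert (n - 1) S, hins hS⟩)
  · rintro ⟨h1, h2⟩
    funext j
    obtain ⟨S, hSn⟩ := j
    show (α • AmatSucc q n + β • Bmat q n).mulVec X ⟨S, hSn⟩ = 0
    by_cases hm : n - 1 ∈ S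
    · have hT : S.erase (n - 1) ∈ subsetsOf (n - 1) := by
        rw [mem_subsetsOf (show (1:ℕ) ≤ n by omega)] at hSn
        rw [mem_subsetsOf (show (1:ℕ) ≤ n - 1 by omega)]
        intro x hx
        have h1x := Finset.mem_of_mem_erase hx
        have h2x := Finset.ne_of_mem_erase hx
        have := hSn x h1x
        omega
      have hE : (⟨S, hSn⟩ : ↥(subsetsOf n))
          = ⟨insert (n - 1) (S.erase (n - 1)), hins hT⟩ :=
        Subtype.ext (Finset.insert_erase hm).symm
      rw [hE, ← key2 _ hT, h2]
      rfl
    · have hT : S ∈ subsetsOf (n - 1) := by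
        rw [mem_subsetsOf (show (1:ℕ) ≤ n by omega)] at hSn
        rw [mem_subsetsOf (show (1:ℕ) ≤ n - 1 by omega)]
        intro x hx
        have hxm : x ≠ n - 1 := fun h => hm (h ▸ hx)
        have := hSn x hx
        omega
      rw [show (⟨S, hSn⟩ : ↥(subsetsOf n)) = ⟨S, hsn hT⟩ from rfl, ← key1 _ hT, h1]
      rfl


end ExtPeaks
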